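/- Let r ≥ 4 and t ≥ 2r be integers and let G be an r-graph on vertex set [t]. Let x = (x_1,…,x_t) be an optimal weighting for G with x_1 ≥ x_2 ≥ ⋯ ≥ x_t ≥ 0. Then either x_1 < x_{t−2r+3} + x_{t−2r+4}, or λ(G) ≤ (1/r!)·(t−r)^{r−1}·(∏_{i=t−r+2}^{t−2} i) / ((t−r+1)^{r−2}·(t−1)^{r−2}), and this quantity is strictly less than (1/r!)·(∏_{i=t−r}^{t−1} i)/(t−1)^r = λ([t−1]^{(r)}). -/

import Mathlib

/-- `lagEval E x` is λ(G,x): the sum over the edges of `E` of the product of the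
weights (under `x`) of their vertices. -/
def lagEval (E : Finset (Finset ℕ)) (x : ℕ → ℝ) : ℝ :=
  ∑ e ∈ E, ∏ i ∈ e, x i

/-- A feasible weighting: nonnegative entries, finitely supported, total weight 1. -/
def Feasible (x : ℕ → ℝ) : Prop :=
  (∀ i, 0 ≤ x i) ∧ ∃ S : Finset ℕ, (∀ i ∉ S, x i = 0) ∧ ∑ i ∈ S, x i = 1

/-- A feasible weighting on the vertex set [n] = {1,…,n}. -/
def FeasibleOn (n : ℕ) (x : ℕ → ℝ) : Prop :=
  (∀ i, 0 ≤ x i) ∧ (∀ i ∉ Finset.Icc 1 n, x i = 0) ∧ ∑ i ∈ Finset.Icc 1 n, x i = 1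

/-- The Lagrangian λ(G) of a hypergraph with edge set `E`: the supremum (in fact
maximum) of λ(G,x) over all feasible weightings `x`. -/
noncomputable def lagrangian (E : Finset (Finset ℕ)) : ℝ :=
  sSup {y : ℝ | ∃ x : ℕ → ℝ, Feasible x ∧ lagEval E x = y}

/-- `completeG s r` is [s]^{(r)}, the complete r-graph on {1,…,s}. -/
def completeG (s r : ℕ) : Finset (Finset ℕ) :=
  (Finset.Icc 1 s).powersetCard r

/-- `E` is (the edge set of) an r-graph on the vertex set [n] = {1,…,n}. -/
def IsRGraphOn (r n : ℕ) (E : Finset (Finset ℕ)) : Prop :=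
  ∀ e ∈ E, e.card = r ∧ e ⊆ Finset.Icc 1 n

/-- The r-graph `E` contains a clique of order `s` (inside the vertex set `V`):
some `s`-element subset of `V` has all of its `r`-element subsets as edges. -/
def ContainsCliqueOn (V : Finset ℕ) (r s : ℕ) (E : Finset (Finset ℕ)) : Prop :=
  ∃ S : Finset ℕ, S ⊆ V ∧ S.card = s ∧ S.powersetCard r ⊆ E

/-- `DomLE A B`: `A` and `B` have the same size and, listing both in increasing
order as `i_1 < ⋯ < i_r` and `j_1 < ⋯ < j_r`, one has `i_k ≤ j_k` for all `k`
(equivalently, for every threshold `c`, `A` has at most as many elements above `c`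
as `B`). -/
def DomLE (A B : Finset ℕ) : Prop :=
  A.card = B.card ∧
    ∀ c : ℕ, (A.filter fun a => c < a).card ≤ (B.filter fun b => c < b).card

/-- `E` is left-compressed: together with any edge it contains every set of positive
integers dominating it from the left. -/
def LeftCompressed (E : Finset (Finset ℕ)) : Prop :=
  ∀ B ∈ E, ∀ A : Finset ℕ, (∀ a ∈ A, 1 ≤ a) → DomLE A B → A ∈ E

/-- `nbhd E i` is E_i, the (r-1)-neighborhood of the vertex `i`:
all sets `A` with `i ∉ A` and `A ∪ {i} ∈ E`. -/
def nbhd (E : Finset (Finset ℕ)) (i : ℕ) : Finset (Finset ℕ) :=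
  (E.filter fun e => i ∈ e).image fun e => e.erase i

/-- `nbhd2 E i j` is E_{ij}, the (r-2)-neighborhood of the pair of vertices `i, j`. -/
def nbhd2 (E : Finset (Finset ℕ)) (i j : ℕ) : Finset (Finset ℕ) :=
  (E.filter fun e => i ∈ e ∧ j ∈ e).image fun e => (e.erase i).erase j

/-- `C` consists of the first `m` r-element subsets of {1,2,3,…} in the colex
ordering: it has `m` edges, all of them r-element sets of positive integers, and it
is an initial segment for the colex order. -/
def IsColexSegment (r m : ℕ) (C : Finset (Finset ℕ)) : Prop :=
  C.card = m ∧ (∀ e ∈ C, e.card = r ∧ ∀ a ∈ e, 1 ≤ a) ∧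
    ∀ A B : Finset ℕ, A.card = r → (∀ a ∈ A, 1 ≤ a) → B ∈ C →
      toColex A < toColex B → A ∈ C

open Finset
section AuxLemmas

lemma feasible_le_one {x : ℕ → ℝ} (hx : Feasible x) (i : ℕ) : x i ≤ 1 := by
  obtain ⟨hx0, S, hS0, hS1⟩ := hx
  by_cases hi : i ∈ S
  · calc x i ≤ ∑ j ∈ S, x j := Finset.single_le_sum (fun j _ => hx0 j) hi
    _ = 1 := hS1
  · rw [hS0 i hi]; norm_num

lemma lagEval_le_card {E : Finset (Finset ℕ)} {x : ℕ → ℝ} (hx : Feasible x) :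
    lagEval E x ≤ E.card := by
  unfold lagEval
  calc ∑ e ∈ E, ∏ i ∈ e, x i ≤ ∑ e ∈ E, 1 :=
        Finset.sum_le_sum fun e _ =>
          Finset.prod_le_one (fun i _ => hx.1 i) (fun i _ => feasible_le_one hx i)
    _ = E.card := by simp

lemma bddAbove_lagSet (E : Finset (Finset ℕ)) :
    BddAbove {y : ℝ | ∃ x : ℕ → ℝ, Feasible x ∧ lagEval E x = y} := by
  refine ⟨E.card, ?_⟩
  rintro y ⟨x, hx, rfl⟩
  exact lagEval_le_card hx

lemma le_lagrangian {E : Finset (Finset ℕ)} {x : ℕ → ℝ} (hx : Feasible x) :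
    lagEval E x ≤ lagrangian E :=
  le_csSup (bddAbove_lagSet E) ⟨x, hx, rfl⟩

lemma FeasibleOn.feasible {n : ℕ} {x : ℕ → ℝ} (h : FeasibleOn n x) : Feasible x :=
  ⟨h.1, Finset.Icc 1 n, h.2.1, h.2.2⟩

variable {ι : Type*} [Fintype ι] [DecidableEq ι]

lemma esymm_swap_aux (k : ℕ) (z : ι → ℝ) (i j : ι) (hij : i ≠ j) :
    ∑ A ∈ (univ : Finset ι).powersetCard k |>.filter (fun A => i ∈ A ∧ j ∉ A),
        ∏ l ∈ A.erase i, z l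
      = ∑ A ∈ (univ : Finset ι).powersetCard k |>.filter (fun A => j ∈ A ∧ i ∉ A),
        ∏ l ∈ A.erase j, z l := by
  refine Finset.sum_nbij' (fun A => insert j (A.erase i)) (fun A => insert i (A.erase j))
    ?_ ?_ ?_ ?_ ?_
  · intro A hA
    simp only [mem_filter, mem_powersetCard] at hA ⊢
    obtain ⟨⟨hsub, hcard⟩, hiA, hjA⟩ := hA
    have hjnotin : j ∉ A.erase i := fun h => hjA (mem_of_mem_erase h)
    have h1 : 1 ≤ A.card := Finset.one_le_card.2 ⟨i, hiA⟩
    refine ⟨⟨subset_univ _, ?_⟩, mem_insert_self _ _, ?_⟩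
    · rw [card_insert_of_notMem hjnotin, card_erase_of_mem hiA]
      omega
    · simp only [mem_insert, mem_erase, not_or]
      exact ⟨hij, by simp⟩
  · intro A hA
    simp only [mem_filter, mem_powersetCard] at hA ⊢
    obtain ⟨⟨hsub, hcard⟩, hjA, hiA⟩ := hA
    have hinotin : i ∉ A.erase j := fun h => hiA (mem_of_mem_erase h)
    have h1 : 1 ≤ A.card := Finset.one_le_card.2 ⟨j, hjA⟩
    refine ⟨⟨subset_univ _, ?_⟩, mem_insert_self _ _, ?_⟩
    · rw [card_insert_of_notMem hinotin, card_erase_of_mem hjA]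
      omega
    · simp only [mem_insert, mem_erase, not_or]
      exact ⟨hij.symm, by simp⟩
  · intro A hA
    simp only [mem_filter, mem_powersetCard] at hA
    obtain ⟨⟨hsub, hcard⟩, hiA, hjA⟩ := hA
    have hjnotin : j ∉ A.erase i := fun h => hjA (mem_of_mem_erase h)
    rw [erase_insert hjnotin, insert_erase hiA]
  · intro A hA
    simp only [mem_filter, mem_powersetCard] at hA
    obtain ⟨⟨hsub, hcard⟩, hjA, hiA⟩ := hA
    have hinotin : i ∉ A.erase j := fun h => hiA (mem_of_mem_erase h)
    rw [erase_insert hinotin, insert_erase hjA]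
  · intro A hA
    simp only [mem_filter, mem_powersetCard] at hA
    obtain ⟨⟨hsub, hcard⟩, hiA, hjA⟩ := hA
    have hjnotin : j ∉ A.erase i := fun h => hjA (mem_of_mem_erase h)
    rw [erase_insert hjnotin]

lemma esymm_decomp (k : ℕ) (z : ι → ℝ) (i j : ι) (hij : i ≠ j) :
    ∑ A ∈ (univ : Finset ι).powersetCard k, ∏ l ∈ A, z l =
      z i * z j * (∑ A ∈ (univ : Finset ι).powersetCard k |>.filter (fun A => i ∈ A ∧ j ∈ A),
          ∏ l ∈ (A.erase i).erase j, z l)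
      + z i * (∑ A ∈ (univ : Finset ι).powersetCard k |>.filter (fun A => i ∈ A ∧ j ∉ A),
          ∏ l ∈ A.erase i, z l)
      + z j * (∑ A ∈ (univ : Finset ι).powersetCard k |>.filter (fun A => j ∈ A ∧ i ∉ A),
          ∏ l ∈ A.erase j, z l)
      + ∑ A ∈ (univ : Finset ι).powersetCard k |>.filter (fun A => i ∉ A ∧ j ∉ A),
          ∏ l ∈ A, z l := by
  classical
  set F := (univ : Finset ι).powersetCard k with hF
  rw [← sum_filter_add_sum_filter_not F (fun A => i ∈ A)]
  rw [← sum_filter_add_sum_filter_not (F.filter (fun A => i ∈ A)) (fun A => j ∈ A)]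
  rw [← sum_filter_add_sum_filter_not (F.filter (fun A => ¬ i ∈ A)) (fun A => j ∈ A)]
  rw [filter_filter, filter_filter, filter_filter, filter_filter]
  have e1 : ∑ A ∈ F.filter (fun A => i ∈ A ∧ j ∈ A), ∏ l ∈ A, z l
      = z i * z j * ∑ A ∈ F.filter (fun A => i ∈ A ∧ j ∈ A), ∏ l ∈ (A.erase i).erase j, z l := by
    rw [mul_assoc, mul_sum, mul_sum]
    refine sum_congr rfl fun A hA => ?_
    simp only [mem_filter] at hA
    rw [mul_prod_erase _ _ (mem_erase.2 ⟨Ne.symm hij, hA.2.2⟩), mul_prod_erase _ _ hA.2.1]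
  have e2 : ∑ A ∈ F.filter (fun A => i ∈ A ∧ ¬ j ∈ A), ∏ l ∈ A, z l
      = z i * ∑ A ∈ F.filter (fun A => i ∈ A ∧ ¬ j ∈ A), ∏ l ∈ A.erase i, z l := by
    rw [mul_sum]
    exact sum_congr rfl fun A hA => by
      simp only [mem_filter] at hA
      rw [mul_prod_erase _ _ hA.2.1]
  have e3 : ∑ A ∈ F.filter (fun A => ¬ i ∈ A ∧ j ∈ A), ∏ l ∈ A, z l
      = z j * ∑ A ∈ F.filter (fun A => j ∈ A ∧ ¬ i ∈ A), ∏ l ∈ A.erase j, z l := by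
    have hfe : F.filter (fun A => ¬ i ∈ A ∧ j ∈ A) = F.filter (fun A => j ∈ A ∧ ¬ i ∈ A) := by
      ext A; simp [and_comm]
    rw [mul_sum, hfe]
    exact sum_congr rfl fun A hA => by
      simp only [mem_filter] at hA
      rw [mul_prod_erase _ _ hA.2.1]
  rw [e1, e2, e3]
  ring

set_option maxHeartbeats 1000000 in
lemma esymm_le_on_simplex (k : ℕ) (z : ι → ℝ) (hz : z ∈ stdSimplex ℝ ι) :
    ∑ A ∈ (univ : Finset ι).powersetCard k, ∏ l ∈ A, z l
      ≤ ((Fintype.card ι).choose k : ℝ) * (1 / (Fintype.card ι : ℝ)) ^ k := by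
  classical
  obtain ⟨hznn, hzsum⟩ := hz
  have hne : Nonempty ι := by
    rcases isEmpty_or_nonempty ι with h | h
    · exfalso; rw [Finset.univ_eq_empty] at hzsum; simp at hzsum
    · exact h
  set n := Fintype.card ι with hn
  have hn0 : 0 < n := Fintype.card_pos
  set f : (ι → ℝ) → ℝ := fun y => ∑ A ∈ (univ : Finset ι).powersetCard k, ∏ l ∈ A, y l
    with hfdef
  have hf : Continuous f := by
    apply continuous_finset_sum
    intro A _
    exact continuous_finset_prod _ fun l _ => continuous_apply l
  have hS : IsCompact (stdSimplex ℝ ι) := isCompact_stdSimplex ℝ ι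
  obtain ⟨z₀, hz₀S, hz₀max⟩ := hS.exists_isMaxOn ⟨z, hznn, hzsum⟩ hf.continuousOn
  set K : Set (ι → ℝ) := stdSimplex ℝ ι ∩ {y | f y = f z₀} with hK
  have hKc : IsCompact K := hS.inter_right (isClosed_eq hf continuous_const)
  have hKne : K.Nonempty := ⟨z₀, hz₀S, rfl⟩
  set g : (ι → ℝ) → ℝ := fun y => ∑ l, (y l) ^ 2 with hgdef
  have hg : Continuous g := by
    apply continuous_finset_sum
    intro l _
    exact (continuous_apply l).pow 2
  obtain ⟨w, hwK, hwmin⟩ := hKc.exists_isMinOn hKne hg.continuousOn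
  have hwS : w ∈ stdSimplex ℝ ι := hwK.1
  have hwf : f w = f z₀ := hwK.2
  have hconst : ∀ i j : ι, w i = w j := by
    by_contra hcon
    push_neg at hcon
    obtain ⟨i, j, hij2⟩ := hcon
    have hij : i ≠ j := fun h => hij2 (by rw [h])
    set m : ℝ := (w i + w j) / 2 with hm
    set w' : ι → ℝ := Function.update (Function.update w i m) j m with hw'
    have hw'j : w' j = m := Function.update_self _ _ _
    have hw'i : w' i = m := by
      rw [hw', Function.update_of_ne hij, Function.update_self]
    have hw'off : ∀ l, l ≠ i → l ≠ j → w' l = w l := by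
      intro l hli hlj
      rw [hw', Function.update_of_ne hlj, Function.update_of_ne hli]
    have hij3 : i ∈ (univ : Finset ι) \ {j} := by simp [hij]
    have hsumw' : ∑ l, w' l = ∑ l, w l := by
      rw [hw', Finset.sum_update_of_mem (mem_univ j), Finset.sum_update_of_mem hij3]
      rw [Finset.sum_eq_sum_sdiff_singleton_add (mem_univ j) w,
        Finset.sum_eq_sum_sdiff_singleton_add hij3 w]
      ring
    have hminn : 0 ≤ m := by
      have h1 := hwS.1 i
      have h2 := hwS.1 j
      rw [hm]; linarith
    have hw'S : w' ∈ stdSimplex ℝ ι := by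
      constructor
      · intro l
        rcases eq_or_ne l j with rfl | hlj
        · rw [hw'j]; exact hminn
        · rcases eq_or_ne l i with rfl | hli
          · rw [hw'i]; exact hminn
          · rw [hw'off l hli hlj]; exact hwS.1 l
      · rw [hsumw']; exact hwS.2
    have hdw := esymm_decomp k w i j hij
    have hdw' := esymm_decomp k w' i j hij
    set S3 := ∑ A ∈ (univ : Finset ι).powersetCard k |>.filter (fun A => i ∈ A ∧ j ∈ A),
        ∏ l ∈ (A.erase i).erase j, w l with hS3
    set S1 := ∑ A ∈ (univ : Finset ι).powersetCard k |>.filter (fun A => i ∈ A ∧ j ∉ A),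
        ∏ l ∈ A.erase i, w l with hS1
    set S2 := ∑ A ∈ (univ : Finset ι).powersetCard k |>.filter (fun A => j ∈ A ∧ i ∉ A),
        ∏ l ∈ A.erase j, w l with hS2
    set P0 := ∑ A ∈ (univ : Finset ι).powersetCard k |>.filter (fun A => i ∉ A ∧ j ∉ A),
        ∏ l ∈ A, w l with hP0
    have c3 : (∑ A ∈ (univ : Finset ι).powersetCard k |>.filter (fun A => i ∈ A ∧ j ∈ A),
        ∏ l ∈ (A.erase i).erase j, w' l) = S3 := by
      refine sum_congr rfl fun A hA => prod_congr rfl fun l hl => ?_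
      have hlj : l ≠ j := (mem_erase.1 hl).1
      have hli : l ≠ i := (mem_erase.1 (mem_of_mem_erase hl)).1
      exact hw'off l hli hlj
    have c1 : (∑ A ∈ (univ : Finset ι).powersetCard k |>.filter (fun A => i ∈ A ∧ j ∉ A),
        ∏ l ∈ A.erase i, w' l) = S1 := by
      refine sum_congr rfl fun A hA => prod_congr rfl fun l hl => ?_
      have hli : l ≠ i := (mem_erase.1 hl).1
      have hlj : l ≠ j := by
        rintro rfl
        exact (mem_filter.1 hA).2.2 (mem_of_mem_erase hl)
      exact hw'off l hli hlj
    have c2 : (∑ A ∈ (univ : Finset ι).powersetCard k |>.filter (fun A => j ∈ A ∧ i ∉ A),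
        ∏ l ∈ A.erase j, w' l) = S2 := by
      refine sum_congr rfl fun A hA => prod_congr rfl fun l hl => ?_
      have hlj : l ≠ j := (mem_erase.1 hl).1
      have hli : l ≠ i := by
        rintro rfl
        exact (mem_filter.1 hA).2.2 (mem_of_mem_erase hl)
      exact hw'off l hli hlj
    have c0 : (∑ A ∈ (univ : Finset ι).powersetCard k |>.filter (fun A => i ∉ A ∧ j ∉ A),
        ∏ l ∈ A, w' l) = P0 := by
      refine sum_congr rfl fun A hA => prod_congr rfl fun l hl => ?_
      have hli : l ≠ i := by rintro rfl; exact (mem_filter.1 hA).2.1 hl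
      have hlj : l ≠ j := by rintro rfl; exact (mem_filter.1 hA).2.2 hl
      exact hw'off l hli hlj
    rw [c0, c1, c2, c3, hw'i, hw'j] at hdw'
    have hswap : S1 = S2 := esymm_swap_aux k w i j hij
    have hS3nn : 0 ≤ S3 := by
      refine sum_nonneg fun A hA => prod_nonneg fun l _ => hwS.1 l
    have hge : f w ≤ f w' := by
      have hsq : 0 ≤ m * m - w i * w j := by nlinarith [sq_nonneg (w i - w j)]
      have : f w' - f w = (m * m - w i * w j) * S3 := by
        rw [hfdef]; dsimp only
        rw [hdw, hdw', ← hswap]; ring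
      nlinarith [mul_nonneg hsq hS3nn]
    have hw'K : w' ∈ K := by
      refine ⟨hw'S, le_antisymm (isMaxOn_iff.1 hz₀max w' hw'S) ?_⟩
      rw [← hwf]; exact hge
    have hgww : g w' < g w := by
      have hsq : 0 < (w i - w j) ^ 2 := by
        have hne2 : w i - w j ≠ 0 := sub_ne_zero.2 hij2
        positivity
      have e1 : g w' = m ^ 2 + (m ^ 2 + ∑ l ∈ ((univ : Finset ι) \ {j}) \ {i}, (w l) ^ 2) := by
        rw [hgdef]; dsimp only
        rw [Finset.sum_eq_sum_sdiff_singleton_add (mem_univ j) (fun l => (w' l) ^ 2),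
          Finset.sum_eq_sum_sdiff_singleton_add hij3 (fun l => (w' l) ^ 2), hw'i, hw'j]
        rw [Finset.sum_congr rfl fun l hl => ?_]
        · ring
        · simp only [mem_sdiff, mem_singleton] at hl
          rw [hw'off l hl.2 hl.1.2]
      have e2 : g w = (w j) ^ 2 + ((w i) ^ 2 + ∑ l ∈ ((univ : Finset ι) \ {j}) \ {i}, (w l) ^ 2) := by
        rw [hgdef]; dsimp only
        rw [Finset.sum_eq_sum_sdiff_singleton_add (mem_univ j) (fun l => (w l) ^ 2),
          Finset.sum_eq_sum_sdiff_singleton_add hij3 (fun l => (w l) ^ 2)]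
        ring
      rw [e1, e2, hm]
      nlinarith [hsq]
    exact absurd (isMinOn_iff.1 hwmin w' hw'K) (not_le.2 hgww)
  have hwc : ∀ l, w l = 1 / (n : ℝ) := by
    have i₀ : ι := Classical.arbitrary ι
    have hsum : ∑ l, w l = 1 := hwS.2
    have hsc : ∑ l, w l = (n : ℝ) * w i₀ := by
      rw [Finset.sum_congr rfl fun l _ => hconst l i₀, Finset.sum_const, card_univ,
        nsmul_eq_mul, hn]
    intro l
    rw [hconst l i₀]
    rw [hsum] at hsc
    field_simp
    linarith
  have hfweq : f w = (n.choose k : ℝ) * (1 / (n : ℝ)) ^ k := by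
    rw [hfdef]; dsimp only
    rw [Finset.sum_congr rfl (fun A hA => show ∏ l ∈ A, w l = (1 / (n : ℝ)) ^ k by
      rw [Finset.prod_congr rfl fun l _ => hwc l, Finset.prod_const,
        (mem_powersetCard.1 hA).2])]
    rw [Finset.sum_const, card_powersetCard, card_univ, nsmul_eq_mul, hn]
  calc ∑ A ∈ (univ : Finset ι).powersetCard k, ∏ l ∈ A, z l
      = f z := rfl
    _ ≤ f z₀ := isMaxOn_iff.1 hz₀max z ⟨hznn, hzsum⟩
    _ = f w := hwf.symm
    _ = _ := hfweq

lemma maclaurin (V : Finset ℕ) (k : ℕ) (hk : 0 < k) (x : ℕ → ℝ) (hx : ∀ i, 0 ≤ x i) :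
    ∑ A ∈ V.powersetCard k, ∏ i ∈ A, x i
      ≤ (V.card.choose k : ℝ) * ((∑ i ∈ V, x i) / (V.card : ℝ)) ^ k := by
  classical
  set σ := ∑ i ∈ V, x i with hσ
  have hVmap : V = (univ : Finset {a // a ∈ V}).map (Function.Embedding.subtype _) := by
    rw [univ_eq_attach, attach_map_val]
  have hcard : Fintype.card {a // a ∈ V} = V.card := Fintype.card_coe V
  have hLHS : ∑ A ∈ V.powersetCard k, ∏ i ∈ A, x i
      = ∑ A ∈ (univ : Finset {a // a ∈ V}).powersetCard k, ∏ a ∈ A, x ↑a := by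
    conv_lhs => rw [hVmap]
    rw [powersetCard_map, Finset.sum_map]
    refine sum_congr rfl fun A hA => ?_
    rw [RelEmbedding.coe_toEmbedding, mapEmbedding_apply, Finset.prod_map]
    rfl
  have hσ' : σ = ∑ a : {a // a ∈ V}, x ↑a := by
    conv_lhs => rw [hσ, hVmap]
    rw [Finset.sum_map]
    rfl
  have hσnn : 0 ≤ σ := sum_nonneg fun i _ => hx i
  rcases eq_or_lt_of_le hσnn with hσ0 | hσpos
  · have hzero : ∀ i ∈ V, x i = 0 :=
      (sum_eq_zero_iff_of_nonneg (fun i _ => hx i)).1 hσ0.symm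
    have hL0 : ∑ A ∈ V.powersetCard k, ∏ i ∈ A, x i = 0 := by
      refine sum_eq_zero fun A hA => ?_
      obtain ⟨hAV, hAc⟩ := mem_powersetCard.1 hA
      obtain ⟨a, ha⟩ := Finset.card_pos.1 (hAc ▸ hk)
      exact prod_eq_zero ha (hzero a (hAV ha))
    rw [hL0, ← hσ0, zero_div, zero_pow hk.ne', mul_zero]
  · set z : {a // a ∈ V} → ℝ := fun a => x ↑a / σ with hz
    have hzS : z ∈ stdSimplex ℝ {a // a ∈ V} := by
      constructor
      · intro a; exact div_nonneg (hx a) hσnn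
      · rw [hz]; dsimp only; rw [← Finset.sum_div, ← hσ', div_self hσpos.ne']
    have key := esymm_le_on_simplex k z hzS
    have h2 : ∑ A ∈ (univ : Finset {a // a ∈ V}).powersetCard k, ∏ a ∈ A, z a
        = (∑ A ∈ (univ : Finset {a // a ∈ V}).powersetCard k, ∏ a ∈ A, x ↑a) / σ ^ k := by
      rw [Finset.sum_div]
      refine sum_congr rfl fun A hA => ?_
      rw [hz]; dsimp only
      rw [Finset.prod_div_distrib, Finset.prod_const, (mem_powersetCard.1 hA).2]
    rw [h2, div_le_iff₀ (pow_pos hσpos k), hcard] at key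
    rw [hLHS]
    calc ∑ A ∈ (univ : Finset {a // a ∈ V}).powersetCard k, ∏ a ∈ A, x ↑a
        ≤ (V.card.choose k : ℝ) * (1 / (V.card : ℝ)) ^ k * σ ^ k := key
      _ = (V.card.choose k : ℝ) * (σ / (V.card : ℝ)) ^ k := by
          rw [div_pow, div_pow, one_pow]; ring

noncomputable def locDeg (E : Finset (Finset ℕ)) (x : ℕ → ℝ) (i : ℕ) : ℝ :=
  ∑ e ∈ E.filter (fun e => i ∈ e), ∏ j ∈ e.erase i, x j

lemma locDeg_nonneg {E : Finset (Finset ℕ)} {x : ℕ → ℝ} (hx : ∀ j, 0 ≤ x j) (i : ℕ) :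
    0 ≤ locDeg E x i :=
  sum_nonneg fun e _ => prod_nonneg fun j _ => hx j

lemma sum_locDeg {r t : ℕ} {E : Finset (Finset ℕ)} (hE : IsRGraphOn r t E) (x : ℕ → ℝ) :
    ∑ i ∈ Icc 1 t, x i * locDeg E x i = r * lagEval E x := by
  unfold locDeg lagEval
  calc ∑ i ∈ Icc 1 t, x i * ∑ e ∈ E.filter (fun e => i ∈ e), ∏ j ∈ e.erase i, x j
      = ∑ i ∈ Icc 1 t, ∑ e ∈ E, (if i ∈ e then x i * ∏ j ∈ e.erase i, x j else 0) := by
        refine sum_congr rfl fun i _ => ?_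
        rw [mul_sum, sum_filter]
    _ = ∑ e ∈ E, ∑ i ∈ Icc 1 t, (if i ∈ e then x i * ∏ j ∈ e.erase i, x j else 0) :=
        sum_comm
    _ = ∑ e ∈ E, (r : ℝ) * ∏ j ∈ e, x j := by
        refine sum_congr rfl fun e he => ?_
        rw [Finset.sum_ite_mem, Finset.inter_eq_right.2 (hE e he).2]
        have : ∀ i ∈ e, x i * ∏ j ∈ e.erase i, x j = ∏ j ∈ e, x j := fun i hi =>
          Finset.mul_prod_erase e x hi
        rw [sum_congr rfl this, sum_const, nsmul_eq_mul, (hE e he).1]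
    _ = (r : ℝ) * ∑ e ∈ E, ∏ j ∈ e, x j := by rw [mul_sum]

lemma lagEval_update (E : Finset (Finset ℕ)) (x : ℕ → ℝ) (u v : ℕ) (huv : u ≠ v) (ε : ℝ) :
    lagEval E (Function.update (Function.update x u (x u - ε)) v (x v + ε))
      = lagEval E x + ε * locDeg E x v - ε * locDeg E x u
        - ε ^ 2 * ∑ e ∈ E.filter (fun e => u ∈ e ∧ v ∈ e), ∏ j ∈ (e.erase u).erase v, x j := by
  classical
  set x' := Function.update (Function.update x u (x u - ε)) v (x v + ε) with hx'
  have hx'v : x' v = x v + ε := Function.update_self _ _ _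
  have hx'u : x' u = x u - ε := by
    rw [hx', Function.update_of_ne huv, Function.update_self]
  have hx'off : ∀ l, l ≠ u → l ≠ v → x' l = x l := by
    intro l hlu hlv
    rw [hx', Function.update_of_ne hlv, Function.update_of_ne hlu]
  have key : ∀ e ∈ E, ∏ j ∈ e, x' j
      = ∏ j ∈ e, x j + ε * (if v ∈ e then ∏ j ∈ e.erase v, x j else 0)
        - ε * (if u ∈ e then ∏ j ∈ e.erase u, x j else 0)
        - ε ^ 2 * (if u ∈ e ∧ v ∈ e then ∏ j ∈ (e.erase u).erase v, x j else 0) := by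
    intro e _
    by_cases hu : u ∈ e <;> by_cases hv : v ∈ e
    · -- both
      have hveu : v ∈ e.erase u := mem_erase.2 ⟨(Ne.symm huv), hv⟩
      have hp' : ∏ j ∈ (e.erase u).erase v, x' j = ∏ j ∈ (e.erase u).erase v, x j := by
        refine prod_congr rfl fun l hl => ?_
        have hlv : l ≠ v := (mem_erase.1 hl).1
        have hlu : l ≠ u := (mem_erase.1 (mem_of_mem_erase hl)).1
        exact hx'off l hlu hlv
      have e1 : ∏ j ∈ e, x' j = (x u - ε) * ((x v + ε) * ∏ j ∈ (e.erase u).erase v, x j) := by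
        rw [← Finset.mul_prod_erase e x' hu, ← Finset.mul_prod_erase (e.erase u) x' hveu,
          hx'u, hx'v, hp']
      have e2 : ∏ j ∈ e, x j = x u * (x v * ∏ j ∈ (e.erase u).erase v, x j) := by
        rw [← Finset.mul_prod_erase e x hu, ← Finset.mul_prod_erase (e.erase u) x hveu]
      have e3 : ∏ j ∈ e.erase v, x j = x u * ∏ j ∈ (e.erase u).erase v, x j := by
        have huev : u ∈ e.erase v := mem_erase.2 ⟨huv, hu⟩
        rw [← Finset.mul_prod_erase (e.erase v) x huev, Finset.erase_right_comm]
      have e4 : ∏ j ∈ e.erase u, x j = x v * ∏ j ∈ (e.erase u).erase v, x j :=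
        (Finset.mul_prod_erase (e.erase u) x hveu).symm
      rw [if_pos hv, if_pos hu, if_pos ⟨hu, hv⟩, e1, e2, e3, e4]
      ring
    · -- u only
      have hp' : ∏ j ∈ e.erase u, x' j = ∏ j ∈ e.erase u, x j := by
        refine prod_congr rfl fun l hl => ?_
        exact hx'off l (mem_erase.1 hl).1 (fun h => hv (h ▸ mem_of_mem_erase hl))
      have e1 : ∏ j ∈ e, x' j = (x u - ε) * ∏ j ∈ e.erase u, x j := by
        rw [← Finset.mul_prod_erase e x' hu, hx'u, hp']
      have e2 : ∏ j ∈ e, x j = x u * ∏ j ∈ e.erase u, x j :=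
        (Finset.mul_prod_erase e x hu).symm
      rw [if_neg hv, if_pos hu, if_neg (fun h => hv h.2), e1, e2]
      ring
    · -- v only
      have hp' : ∏ j ∈ e.erase v, x' j = ∏ j ∈ e.erase v, x j := by
        refine prod_congr rfl fun l hl => ?_
        exact hx'off l (fun h => hu (h ▸ mem_of_mem_erase hl)) (mem_erase.1 hl).1
      have e1 : ∏ j ∈ e, x' j = (x v + ε) * ∏ j ∈ e.erase v, x j := by
        rw [← Finset.mul_prod_erase e x' hv, hx'v, hp']
      have e2 : ∏ j ∈ e, x j = x v * ∏ j ∈ e.erase v, x j :=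
        (Finset.mul_prod_erase e x hv).symm
      rw [if_pos hv, if_neg hu, if_neg (fun h => hu h.1), e1, e2]
      ring
    · -- neither
      have hp' : ∏ j ∈ e, x' j = ∏ j ∈ e, x j := by
        refine prod_congr rfl fun l hl => ?_
        exact hx'off l (fun h => hu (h ▸ hl)) (fun h => hv (h ▸ hl))
      rw [if_neg hv, if_neg hu, if_neg (fun h => hu h.1), hp']
      ring
  unfold lagEval locDeg
  rw [sum_congr rfl key]
  rw [Finset.sum_filter, Finset.sum_filter, Finset.sum_filter, Finset.mul_sum,
    Finset.mul_sum, Finset.mul_sum, ← Finset.sum_add_distrib, ← Finset.sum_sub_distrib,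
    ← Finset.sum_sub_distrib]

lemma locDeg_le_of_opt {r t : ℕ} {E : Finset (Finset ℕ)} (hE : IsRGraphOn r t E)
    {x : ℕ → ℝ} (hfeas : FeasibleOn t x) (hopt : lagEval E x = lagrangian E)
    {u v : ℕ} (hu : u ∈ Icc 1 t) (hv : v ∈ Icc 1 t) (huv : u ≠ v) (hxu : 0 < x u) :
    locDeg E x v ≤ locDeg E x u := by
  classical
  by_contra hcon
  push_neg at hcon
  set D : ℝ := locDeg E x v - locDeg E x u with hD
  have hDpos : 0 < D := by rw [hD]; linarith
  set C : ℝ := ∑ e ∈ E.filter (fun e => u ∈ e ∧ v ∈ e), ∏ j ∈ (e.erase u).erase v, x j with hC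
  have hCnn : 0 ≤ C := sum_nonneg fun e _ => prod_nonneg fun j _ => hfeas.1 j
  set ε : ℝ := min (x u) (D / (2 * (C + 1))) with hε
  have hεpos : 0 < ε := lt_min hxu (by positivity)
  have hεxu : ε ≤ x u := min_le_left _ _
  have hεC : ε * C < D := by
    calc ε * C ≤ D / (2 * (C + 1)) * C := by
          exact mul_le_mul_of_nonneg_right (min_le_right _ _) hCnn
      _ < D := by
          rw [div_mul_eq_mul_div, div_lt_iff₀ (by positivity)]
          nlinarith
  set x' := Function.update (Function.update x u (x u - ε)) v (x v + ε) with hx'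
  have hx'v : x' v = x v + ε := Function.update_self _ _ _
  have hx'u : x' u = x u - ε := by
    rw [hx', Function.update_of_ne huv, Function.update_self]
  have hx'off : ∀ l, l ≠ u → l ≠ v → x' l = x l := by
    intro l hlu hlv
    rw [hx', Function.update_of_ne hlv, Function.update_of_ne hlu]
  have hufil : u ∈ Icc 1 t \ {v} := by simp [mem_sdiff.2, hu, huv]
  have hfeas' : Feasible x' := by
    refine ⟨?_, Icc 1 t, ?_, ?_⟩
    · intro l
      rcases eq_or_ne l v with rfl | hlv
      · rw [hx'v]; have := hfeas.1 l; linarith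
      · rcases eq_or_ne l u with rfl | hlu
        · rw [hx'u]; linarith
        · rw [hx'off l hlu hlv]; exact hfeas.1 l
    · intro l hl
      have hlu : l ≠ u := fun h => hl (h ▸ hu)
      have hlv : l ≠ v := fun h => hl (h ▸ hv)
      rw [hx'off l hlu hlv]
      exact hfeas.2.1 l hl
    · rw [hx', Finset.sum_update_of_mem hv, Finset.sum_update_of_mem hufil]
      have h1 := hfeas.2.2
      rw [Finset.sum_eq_sum_sdiff_singleton_add hv x,
        Finset.sum_eq_sum_sdiff_singleton_add hufil x] at h1
      linarith
  have hup := lagEval_update E x u v huv ε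
  rw [← hx'] at hup
  have hgt : lagEval E x < lagEval E x' := by
    rw [hup]
    have : 0 < ε * D - ε ^ 2 * C := by
      have : ε ^ 2 * C = ε * (ε * C) := by ring
      rw [this]
      have h2 : ε * (ε * C) < ε * D := mul_lt_mul_of_pos_left hεC hεpos
      linarith
    rw [hD] at this
    linarith
  have hle : lagEval E x' ≤ lagrangian E := le_lagrangian hfeas'
  rw [← hopt] at hle
  linarith

lemma prod_Icc_eq_descFactorial (n k : ℕ) (h : k ≤ n) :
    ∏ i ∈ Icc (n - k + 1) n, i = n.descFactorial k := by
  induction k with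
  | zero => simp
  | succ k ih =>
    have hk : k ≤ n := Nat.le_of_succ_le h
    have h1 : n - (k + 1) + 1 = n - k := by omega
    have h2 : n - k < n + 1 := by omega
    rw [h1, Nat.descFactorial_succ, ← ih hk]
    rw [← Finset.Ico_add_one_right_eq_Icc, ← Finset.Ico_add_one_right_eq_Icc,
      Finset.prod_eq_prod_Ico_succ_bot h2]

lemma cast_choose_eq_prod (n k : ℕ) (h : k ≤ n) :
    (n.choose k : ℝ) = (∏ i ∈ Icc (n - k + 1) n, (i : ℝ)) / (k.factorial : ℝ) := by
  rw [eq_div_iff (by positivity)]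
  rw [← Nat.cast_prod, ← Nat.cast_mul]
  norm_cast
  rw [prod_Icc_eq_descFactorial n k h, Nat.descFactorial_eq_factorial_mul_choose]
  ring

lemma aux_pow_lt (a : ℕ) (ha : 1 ≤ a) : ∀ m, 2 ≤ m → a ^ (m - 1) * (a + m) < (a + 1) ^ m := by
  intro m
  induction m with
  | zero => omega
  | succ m ih =>
    intro hm
    rcases Nat.lt_or_ge m 2 with h2 | h2
    · interval_cases m
      · omega
      · -- m+1 = 2
        have : (a + 1) ^ 2 = a * (a + 2) + 1 := by ring
        simpa [this] using Nat.lt_succ_self _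
    · have IH := ih h2
      have h3 : (a + 1) ^ (m + 1) = (a + 1) ^ m * (a + 1) := by ring
      have h4 : a ^ (m + 1 - 1) * (a + (m + 1)) ≤ a ^ (m - 1) * (a + m) * (a + 1) := by
        have hm1 : m - 1 + 1 = m := by omega
        have hee : m + 1 - 1 = m := by omega
        have hpa : a ^ m = a ^ (m - 1) * a := by
          conv_lhs => rw [← hm1]
          rw [pow_succ]
        calc a ^ (m + 1 - 1) * (a + (m + 1)) = a ^ (m - 1) * (a * (a + m + 1)) := by
              rw [hee, hpa]; ring
          _ ≤ a ^ (m - 1) * ((a + m) * (a + 1)) := by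
              have : a * (a + m + 1) ≤ (a + m) * (a + 1) := by nlinarith
              exact Nat.mul_le_mul_left _ this
          _ = a ^ (m - 1) * (a + m) * (a + 1) := by ring
      calc a ^ (m + 1 - 1) * (a + (m + 1)) ≤ a ^ (m - 1) * (a + m) * (a + 1) := h4
        _ < (a + 1) ^ m * (a + 1) :=
            mul_lt_mul_of_pos_right IH (by omega : (0:ℕ) < a + 1)
        _ = (a + 1) ^ (m + 1) := by ring

lemma feasible_sum_le {x : ℕ → ℝ} (hx : Feasible x) (V : Finset ℕ) :
    ∑ i ∈ V, x i ≤ 1 := by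
  obtain ⟨hx0, S, hS0, hS1⟩ := hx
  calc ∑ i ∈ V, x i = ∑ i ∈ V.filter (fun i => i ∈ S), x i := by
        rw [Finset.sum_filter_of_ne]
        intro i _ hne
        by_contra hiS
        exact hne (hS0 i hiS)
    _ ≤ ∑ i ∈ S, x i := Finset.sum_le_sum_of_subset_of_nonneg
        (fun i hi => (mem_filter.1 hi).2) (fun i _ _ => hx0 i)
    _ = 1 := hS1

lemma lagEval_complete_le {s r : ℕ} (hr : 0 < r) {x : ℕ → ℝ} (hx : Feasible x) :
    lagEval (completeG s r) x ≤ (s.choose r : ℝ) * (1 / (s : ℝ)) ^ r := by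
  have hmac := maclaurin (Icc 1 s) r hr x hx.1
  rw [Nat.card_Icc] at hmac
  simp only [Nat.add_sub_cancel] at hmac
  rcases Nat.eq_zero_or_pos s with rfl | hs
  · -- s = 0 : completeG 0 r : powersetCard of Icc 1 0 = ∅
    have h0 : (Icc 1 0 : Finset ℕ) = ∅ := by simp
    unfold lagEval completeG
    rw [h0]
    rcases Nat.eq_zero_or_pos r with rfl | hrr
    · omega
    · rw [show (powersetCard r (∅ : Finset ℕ)) = ∅ from by
        simp [Finset.powersetCard_eq_empty, hrr]]
      simp [Nat.choose_eq_zero_of_lt hrr]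
  · calc lagEval (completeG s r) x ≤ (s.choose r : ℝ) * ((∑ i ∈ Icc 1 s, x i) / (s : ℝ)) ^ r :=
        hmac
      _ ≤ (s.choose r : ℝ) * (1 / (s : ℝ)) ^ r := by
        gcongr
        · exact div_nonneg (sum_nonneg fun i _ => hx.1 i) (by positivity)
        · exact feasible_sum_le hx _

lemma lagrangian_complete (s r : ℕ) (hr : 0 < r) (hs : 0 < s) :
    lagrangian (completeG s r) = (s.choose r : ℝ) * (1 / (s : ℝ)) ^ r := by
  classical
  have huniform : Feasible (fun i => if i ∈ Icc 1 s then 1 / (s : ℝ) else 0) := by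
    refine ⟨fun i => ?_, Icc 1 s, fun i hi => if_neg hi, ?_⟩
    · dsimp only; split <;> positivity
    · rw [Finset.sum_congr rfl fun i hi => if_pos hi, Finset.sum_const, Nat.card_Icc,
        Nat.add_sub_cancel, nsmul_eq_mul]
      field_simp
  have hval : lagEval (completeG s r) (fun i => if i ∈ Icc 1 s then 1 / (s : ℝ) else 0)
      = (s.choose r : ℝ) * (1 / (s : ℝ)) ^ r := by
    unfold lagEval completeG
    rw [Finset.sum_congr rfl (fun A hA => ?_), Finset.sum_const, card_powersetCard,
      Nat.card_Icc, Nat.add_sub_cancel, nsmul_eq_mul]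
    obtain ⟨hAV, hAc⟩ := mem_powersetCard.1 hA
    rw [Finset.prod_congr rfl fun i hi => if_pos (hAV hi), Finset.prod_const, hAc]
  refine IsGreatest.csSup_eq ⟨⟨_, huniform, hval⟩, ?_⟩
  rintro y ⟨x, hx, rfl⟩
  exact lagEval_complete_le hr hx

end AuxLemmas

set_option maxHeartbeats 1000000 in
/-- Lemma 2.6(a): for an r-graph `G` on `[t]` (`r ≥ 4`, `t ≥ 2r`) with an optimal
weighting `x` satisfying `x_1 ≥ ⋯ ≥ x_t ≥ 0`, either `x_1 < x_{t−2r+3} + x_{t−2r+4}`,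
or λ(G) is at most the stated bound, which is strictly smaller than
`(1/r!)·(∏_{i=t−r}^{t−1} i)/(t−1)^r = λ([t−1]^{(r)})`. -/
theorem stmt12 (r t : ℕ) (hr : 4 ≤ r) (ht : 2 * r ≤ t)
    (E : Finset (Finset ℕ)) (hE : IsRGraphOn r t E)
    (x : ℕ → ℝ) (hfeas : FeasibleOn t x) (hopt : lagEval E x = lagrangian E)
    (hmono : ∀ i j : ℕ, 1 ≤ i → i ≤ j → j ≤ t → x j ≤ x i) :
    x 1 < x (t - 2 * r + 3) + x (t - 2 * r + 4) ∨
      (lagrangian E ≤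
          1 / (r.factorial : ℝ) * ((t : ℝ) - r) ^ (r - 1) *
            (∏ i ∈ Finset.Icc (t - r + 2) (t - 2), (i : ℝ)) /
            (((t : ℝ) - r + 1) ^ (r - 2) * ((t : ℝ) - 1) ^ (r - 2)) ∧
        1 / (r.factorial : ℝ) * ((t : ℝ) - r) ^ (r - 1) *
            (∏ i ∈ Finset.Icc (t - r + 2) (t - 2), (i : ℝ)) /
            (((t : ℝ) - r + 1) ^ (r - 2) * ((t : ℝ) - 1) ^ (r - 2)) <
          1 / (r.factorial : ℝ) * (∏ i ∈ Finset.Icc (t - r) (t - 1), (i : ℝ)) /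
            ((t : ℝ) - 1) ^ r ∧
        1 / (r.factorial : ℝ) * (∏ i ∈ Finset.Icc (t - r) (t - 1), (i : ℝ)) /
            ((t : ℝ) - 1) ^ r = lagrangian (completeG (t - 1) r)) := by
  by_cases hcase : x 1 < x (t - 2 * r + 3) + x (t - 2 * r + 4)
  · exact Or.inl hcase
  right
  push_neg at hcase
  have hrR : (4 : ℝ) ≤ (r : ℝ) := by exact_mod_cast hr
  have htR : 2 * (r : ℝ) ≤ (t : ℝ) := by exact_mod_cast ht
  set A : ℝ := (t : ℝ) - r with hA
  set T1 : ℝ := (t : ℝ) - 1 with hT1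
  set pm : ℝ := ∏ i ∈ Finset.Icc (t - r + 2) (t - 2), (i : ℝ) with hpm
  have hApos : 0 < A := by rw [hA]; linarith
  have hA1pos : 0 < A + 1 := by linarith
  have hT1pos : 0 < T1 := by rw [hT1]; linarith
  have hpmpos : 0 < pm := by
    rw [hpm]
    refine prod_pos fun i hi => ?_
    have := (mem_Icc.1 hi).1
    have hi1 : (1 : ℕ) ≤ i := by omega
    exact_mod_cast Nat.lt_of_lt_of_le Nat.zero_lt_one hi1
  have hcastA1 : ((t - r + 1 : ℕ) : ℝ) = A + 1 := by
    rw [hA, Nat.cast_add, Nat.cast_sub (by omega : r ≤ t), Nat.cast_one]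
  have hcastA : ((t - r : ℕ) : ℝ) = A := by
    rw [hA, Nat.cast_sub (by omega : r ≤ t)]
  have hcastT1 : ((t - 1 : ℕ) : ℝ) = T1 := by
    rw [hT1, Nat.cast_sub (by omega : 1 ≤ t), Nat.cast_one]
  -- Step 1 : lower bound on x 1
  have hIcc : Icc 1 t = Ioc 0 t := Finset.Icc_add_one_left_eq_Ioc 0 t
  have hsplit : ∑ i ∈ Icc 1 t, x i
      = (∑ i ∈ Ioc 0 (t - 2*r + 2), x i)
        + ((∑ i ∈ Ioc (t - 2*r + 2) (t - 2*r + 3), x i) + ∑ i ∈ Ioc (t - 2*r + 3) t, x i) := by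
    rw [hIcc, ← Finset.sum_Ioc_consecutive x (Nat.zero_le (t - 2*r + 2)) (by omega),
      ← Finset.sum_Ioc_consecutive x (by omega : t - 2*r + 2 ≤ t - 2*r + 3) (by omega)]
  have hmid : ∑ i ∈ Ioc (t - 2*r + 2) (t - 2*r + 3), x i = x (t - 2*r + 3) := by
    rw [show t - 2*r + 3 = (t - 2*r + 2) + 1 from by omega, Nat.Ioc_succ_singleton,
      Finset.sum_singleton]
  have hb1 : ∑ i ∈ Ioc 0 (t - 2*r + 2), x i ≤ ((t - 2*r + 2 : ℕ) : ℝ) * x 1 := by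
    calc ∑ i ∈ Ioc 0 (t - 2*r + 2), x i ≤ ∑ _i ∈ Ioc 0 (t - 2*r + 2), x 1 :=
          sum_le_sum fun i hi => by
            have h := mem_Ioc.1 hi
            exact hmono 1 i le_rfl (by omega) (by omega)
      _ = ((t - 2*r + 2 : ℕ) : ℝ) * x 1 := by
          rw [sum_const, Nat.card_Ioc, Nat.sub_zero, nsmul_eq_mul]
  have hb2 : ∑ i ∈ Ioc (t - 2*r + 3) t, x i ≤ ((2*r - 3 : ℕ) : ℝ) * x (t - 2*r + 4) := by
    calc ∑ i ∈ Ioc (t - 2*r + 3) t, x i ≤ ∑ _i ∈ Ioc (t - 2*r + 3) t, x (t - 2*r + 4) :=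
          sum_le_sum fun i hi => by
            have h := mem_Ioc.1 hi
            exact hmono (t - 2*r + 4) i (by omega) (by omega) (by omega)
      _ = ((2*r - 3 : ℕ) : ℝ) * x (t - 2*r + 4) := by
          rw [sum_const, Nat.card_Ioc, nsmul_eq_mul,
            show t - (t - 2*r + 3) = 2*r - 3 from by omega]
  have hc1 : ((t - 2*r + 2 : ℕ) : ℝ) = (t : ℝ) - 2*r + 2 := by
    rw [Nat.cast_add, Nat.cast_sub (by omega : 2*r ≤ t)]
    push_cast
    ring
  have hc2 : ((2*r - 3 : ℕ) : ℝ) = 2*(r : ℝ) - 3 := by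
    rw [Nat.cast_sub (by omega : 3 ≤ 2*r)]
    push_cast
    ring
  rw [hc1] at hb1
  rw [hc2] at hb2
  have hxk : x (t - 2*r + 4) ≤ x (t - 2*r + 3) :=
    hmono _ _ (by omega) (by omega) (by omega)
  have hxk4nn : 0 ≤ x (t - 2*r + 4) := hfeas.1 _
  have hsum1 := hfeas.2.2
  rw [hsplit, hmid] at hsum1
  have hx1low : 1 ≤ (A + 1) * x 1 := by
    have hh1 : 0 ≤ ((r : ℝ) - 2) * (x (t - 2*r + 3) - x (t - 2*r + 4)) :=
      mul_nonneg (by linarith) (by linarith)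
    have hh2 : 0 ≤ ((r : ℝ) - 1) * (x 1 - x (t - 2*r + 3) - x (t - 2*r + 4)) :=
      mul_nonneg (by linarith) (by linarith)
    rw [hA]
    nlinarith [hb1, hb2, hsum1, hh1, hh2]
  have hx1pos : 0 < x 1 := by nlinarith [hx1low, hA1pos]
  have hx1le : x 1 ≤ 1 := by
    have h := Finset.single_le_sum (f := x) (fun i _ => hfeas.1 i)
      (mem_Icc.2 ⟨le_rfl, by omega⟩ : (1 : ℕ) ∈ Icc 1 t)
    rw [hfeas.2.2] at h
    exact h
  -- Step 2
  have hmem1 : (1 : ℕ) ∈ Icc 1 t := mem_Icc.2 ⟨le_rfl, by omega⟩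
  have hld : ∀ i ∈ Icc 1 t, locDeg E x i ≤ locDeg E x 1 := by
    intro i hi
    rcases eq_or_ne i 1 with rfl | hne
    · exact le_rfl
    · exact locDeg_le_of_opt hE hfeas hopt hmem1 hi (Ne.symm hne) hx1pos
  have hstep2 : (r : ℝ) * lagEval E x ≤ locDeg E x 1 := by
    rw [← sum_locDeg hE x]
    calc ∑ i ∈ Icc 1 t, x i * locDeg E x i ≤ ∑ i ∈ Icc 1 t, x i * locDeg E x 1 :=
          sum_le_sum fun i hi => mul_le_mul_of_nonneg_left (hld i hi) (hfeas.1 i)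
      _ = (∑ i ∈ Icc 1 t, x i) * locDeg E x 1 := by rw [← sum_mul]
      _ = locDeg E x 1 := by rw [hfeas.2.2, one_mul]
  -- Step 3
  have hstep3 : locDeg E x 1 ≤ ∑ B ∈ (Icc 2 t).powersetCard (r - 1), ∏ j ∈ B, x j := by
    unfold locDeg
    have hinj : ∀ e₁ ∈ E.filter (fun e => 1 ∈ e), ∀ e₂ ∈ E.filter (fun e => 1 ∈ e),
        e₁.erase 1 = e₂.erase 1 → e₁ = e₂ := by
      intro e₁ h₁ e₂ h₂ heq
      have m₁ : (1 : ℕ) ∈ e₁ := (mem_filter.1 h₁).2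
      have m₂ : (1 : ℕ) ∈ e₂ := (mem_filter.1 h₂).2
      rw [← Finset.insert_erase m₁, ← Finset.insert_erase m₂, heq]
    rw [show (∑ e ∈ E.filter (fun e => 1 ∈ e), ∏ j ∈ e.erase 1, x j)
        = ∑ B ∈ (E.filter (fun e => 1 ∈ e)).image (fun e => e.erase 1), ∏ j ∈ B, x j from
      (Finset.sum_image (f := fun B => ∏ j ∈ B, x j) hinj).symm]
    refine Finset.sum_le_sum_of_subset_of_nonneg ?_ (fun B _ _ => prod_nonneg fun j _ => hfeas.1 j)
    intro B hB
    obtain ⟨e, he, rfl⟩ := Finset.mem_image.1 hB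
    have heE := (mem_filter.1 he).1
    have h1e : (1 : ℕ) ∈ e := (mem_filter.1 he).2
    refine mem_powersetCard.2 ⟨?_, ?_⟩
    · intro j hj
      have hje : j ∈ e := mem_of_mem_erase hj
      have hj1 : j ≠ 1 := (mem_erase.1 hj).1
      have := mem_Icc.1 ((hE e heE).2 hje)
      exact mem_Icc.2 ⟨by omega, this.2⟩
    · rw [Finset.card_erase_of_mem h1e, (hE e heE).1]
  -- Step 4 : Maclaurin
  have hcard2t : (Icc 2 t).card = t - 1 := by rw [Nat.card_Icc]; omega
  have hsum2 : ∑ i ∈ Icc 2 t, x i = 1 - x 1 := by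
    have hsplit2 : ∑ i ∈ Icc 1 t, x i = x 1 + ∑ i ∈ Icc 2 t, x i := by
      have h12 : Icc 1 t = insert 1 (Icc 2 t) := by
        ext a
        simp only [mem_Icc, mem_insert]
        omega
      rw [h12, Finset.sum_insert (by simp [mem_Icc])]
    have h1 := hfeas.2.2
    rw [hsplit2] at h1
    linarith
  have hmac := maclaurin (Icc 2 t) (r - 1) (by omega) x hfeas.1
  rw [hcard2t, hsum2, hcastT1] at hmac
  -- combine
  have hrpos : (0 : ℝ) < r := by linarith
  have hchain : lagrangian E
      ≤ 1 / (r : ℝ) * ((t - 1).choose (r - 1) : ℝ) * ((1 - x 1) / T1) ^ (r - 1) := by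
    rw [← hopt]
    have h5 : lagEval E x ≤ 1 / (r : ℝ) * locDeg E x 1 := by
      rw [div_mul_eq_mul_div, one_mul, le_div_iff₀ hrpos]
      linarith [hstep2]
    have h7 := mul_le_mul_of_nonneg_left (le_trans hstep3 hmac)
      (by positivity : (0:ℝ) ≤ 1 / (r : ℝ))
    have h8 : 1 / (r : ℝ) * (((t - 1).choose (r - 1) : ℝ) * ((1 - x 1) / T1) ^ (r - 1))
        = 1 / (r : ℝ) * ((t - 1).choose (r - 1) : ℝ) * ((1 - x 1) / T1) ^ (r - 1) := by ring
    linarith [le_trans h5 h7]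
  have hx1b : (1 - x 1) / T1 ≤ (A / (A + 1)) / T1 := by
    have hnum : 1 - x 1 ≤ A / (A + 1) := by
      rw [le_div_iff₀ hA1pos]
      nlinarith [hx1low]
    gcongr
  have hpow : ((1 - x 1) / T1) ^ (r - 1) ≤ ((A / (A + 1)) / T1) ^ (r - 1) :=
    pow_le_pow_left₀ (div_nonneg (by linarith) hT1pos.le) hx1b _
  -- binomial coefficient as product
  have hchoose : ((t - 1).choose (r - 1) : ℝ)
      = (∏ i ∈ Icc (t - r + 1) (t - 1), (i : ℝ)) / ((r - 1).factorial : ℝ) := by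
    have h := cast_choose_eq_prod (t - 1) (r - 1) (by omega)
    rwa [show t - 1 - (r - 1) + 1 = t - r + 1 from by omega] at h
  have htop : ∏ i ∈ Icc (t - r + 2) (t - 1), (i : ℝ) = pm * ((t - 1 : ℕ) : ℝ) := by
    rw [hpm, show t - 1 = (t - 2) + 1 from by omega]
    exact Finset.prod_Icc_succ_top (by omega : t - r + 2 ≤ (t - 2) + 1) _
  have hPsplit : (∏ i ∈ Icc (t - r + 1) (t - 1), (i : ℝ)) = (A + 1) * pm * T1 := by
    rw [← Finset.Ico_add_one_right_eq_Icc, Finset.prod_eq_prod_Ico_succ_bot (by omega : t - r + 1 < t - 1 + 1),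
      show t - r + 1 + 1 = t - r + 2 from by omega, Finset.Ico_add_one_right_eq_Icc, htop, hcastA1, hcastT1]
    ring
  have hfacS : (r : ℝ) * ((r - 1).factorial : ℝ) = (r.factorial : ℝ) := by
    exact_mod_cast congrArg (Nat.cast (R := ℝ)) (Nat.mul_factorial_pred (by omega : r ≠ 0))
  have hfacpos : (0 : ℝ) < (r.factorial : ℝ) := by
    exact_mod_cast r.factorial_pos
  have hfac1pos : (0 : ℝ) < ((r - 1).factorial : ℝ) := by
    exact_mod_cast (r - 1).factorial_pos
  have hBeq : 1 / (r : ℝ) * ((t - 1).choose (r - 1) : ℝ) * ((A / (A + 1)) / T1) ^ (r - 1)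
      = 1 / (r.factorial : ℝ) * A ^ (r - 1) * pm / ((A + 1) ^ (r - 2) * T1 ^ (r - 2)) := by
    rw [hchoose, hPsplit, div_pow, div_pow, ← hfacS]
    rw [show (A + 1) ^ (r - 1) = (A + 1) ^ (r - 2) * (A + 1) from by
        rw [show r - 1 = (r - 2) + 1 from by omega, pow_succ],
      show T1 ^ (r - 1) = T1 ^ (r - 2) * T1 from by
        rw [show r - 1 = (r - 2) + 1 from by omega, pow_succ]]
    have hA1ne : A + 1 ≠ 0 := hA1pos.ne'
    have hT1ne : T1 ≠ 0 := hT1pos.ne'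
    have hrne : (r : ℝ) ≠ 0 := hrpos.ne'
    have hf1ne : ((r - 1).factorial : ℝ) ≠ 0 := hfac1pos.ne'
    have hpA : (A + 1) ^ (r - 2) ≠ 0 := pow_ne_zero _ hA1ne
    have hpT : T1 ^ (r - 2) ≠ 0 := pow_ne_zero _ hT1ne
    field_simp
  have hBle : lagrangian E
      ≤ 1 / (r.factorial : ℝ) * A ^ (r - 1) * pm / ((A + 1) ^ (r - 2) * T1 ^ (r - 2)) := by
    rw [← hBeq]
    calc lagrangian E ≤ 1 / (r : ℝ) * ((t - 1).choose (r - 1) : ℝ) * ((1 - x 1) / T1) ^ (r - 1) :=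
          hchain
      _ ≤ 1 / (r : ℝ) * ((t - 1).choose (r - 1) : ℝ) * ((A / (A + 1)) / T1) ^ (r - 1) := by
          refine mul_le_mul_of_nonneg_left hpow (by positivity)
  -- strict inequality
  have hRsplit : (∏ i ∈ Icc (t - r) (t - 1), (i : ℝ)) = A * ((A + 1) * pm * T1) := by
    rw [← Finset.Ico_add_one_right_eq_Icc, Finset.prod_eq_prod_Ico_succ_bot (by omega : t - r < t - 1 + 1),
      show t - r + 1 = t - r + 1 from rfl, Finset.Ico_add_one_right_eq_Icc, hPsplit, hcastA]
  have hkeyN := aux_pow_lt (t - r) (by omega) (r - 1) (by omega)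
  rw [show r - 1 - 1 = r - 2 from by omega, show (t - r) + (r - 1) = t - 1 from by omega] at hkeyN
  have hkey : A ^ (r - 2) * T1 < (A + 1) ^ (r - 1) := by
    have := (Nat.cast_lt (α := ℝ)).2 hkeyN
    push_cast at this
    rw [hcastA] at this  -- may not be needed
    calc A ^ (r - 2) * T1 = ((t - r : ℕ) : ℝ) ^ (r - 2) * ((t - 1 : ℕ) : ℝ) := by
          rw [hcastA, hcastT1]
      _ < (((t - r : ℕ) : ℝ) + 1) ^ (r - 1) := by exact_mod_cast hkeyN
      _ = (A + 1) ^ (r - 1) := by rw [hcastA]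
  have hBlt : 1 / (r.factorial : ℝ) * A ^ (r - 1) * pm / ((A + 1) ^ (r - 2) * T1 ^ (r - 2))
      < 1 / (r.factorial : ℝ) * (∏ i ∈ Icc (t - r) (t - 1), (i : ℝ)) / T1 ^ r := by
    rw [hRsplit, div_lt_div_iff₀ (by positivity) (by positivity)]
    have eA : A ^ (r - 1) = A ^ (r - 2) * A := by
      rw [show r - 1 = (r - 2) + 1 from by omega, pow_succ]
    have eT : T1 ^ r = T1 ^ (r - 2) * T1 ^ 2 := by
      rw [← pow_add]
      congr 1
      omega
    have hcpos : (0 : ℝ) < 1 / (r.factorial : ℝ) * A * pm * T1 ^ (r - 2) * T1 := by positivity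
    calc 1 / (r.factorial : ℝ) * A ^ (r - 1) * pm * T1 ^ r
        = (A ^ (r - 2) * T1) * (1 / (r.factorial : ℝ) * A * pm * T1 ^ (r - 2) * T1) := by
          rw [eA, eT]; ring
      _ < (A + 1) ^ (r - 1) * (1 / (r.factorial : ℝ) * A * pm * T1 ^ (r - 2) * T1) :=
          mul_lt_mul_of_pos_right hkey hcpos
      _ = 1 / (r.factorial : ℝ) * (A * ((A + 1) * pm * T1)) * ((A + 1) ^ (r - 2) * T1 ^ (r - 2)) := by
          rw [show (A + 1) ^ (r - 1) = (A + 1) ^ (r - 2) * (A + 1) from by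
            rw [show r - 1 = (r - 2) + 1 from by omega, pow_succ]]
          ring
  -- equality with complete graph lagrangian
  have hchooser : ((t - 1).choose r : ℝ)
      = (∏ i ∈ Icc (t - r) (t - 1), (i : ℝ)) / (r.factorial : ℝ) := by
    have h := cast_choose_eq_prod (t - 1) r (by omega)
    rwa [show t - 1 - r + 1 = t - r from by omega] at h
  have hCeq : 1 / (r.factorial : ℝ) * (∏ i ∈ Icc (t - r) (t - 1), (i : ℝ)) / T1 ^ r
      = lagrangian (completeG (t - 1) r) := by
    rw [lagrangian_complete (t - 1) r (by omega) (by omega), hchooser, hcastT1]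
    rw [div_pow, one_pow]
    field_simp
  exact ⟨hBle, hBlt, hCeq⟩
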